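/- For f : [-1,1] → ℝ twice continuously differentiable and x ∈ [-1,1], the identity ∫_0^1 [f''(-b)·ReLU(x+b) + f''(b)·ReLU(-x+b)] db = f(x) + c₁ + c₂x holds, where c₁ = f(0) - f(1) - f(-1) + f'(1) - f'(-1) and c₂ = f'(0) - f'(1) - f'(-1). -/

import Mathlib

open MeasureTheory intervalIntegral

lemma d1c2 {g : ℝ → ℝ} (hg : ContDiff ℝ 2 g) : ContDiff ℝ 1 (deriv g) := by
  have := ContDiff.iterate_deriv' (𝕜 := ℝ) 1 1 (f := g) (by norm_num at hg ⊢; exact hg)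
  simpa using this

lemma d2cont {g : ℝ → ℝ} (hg : ContDiff ℝ 2 g) : Continuous (deriv (deriv g)) :=
  (d1c2 hg).continuous_deriv (le_refl _)

lemma d1diff {g : ℝ → ℝ} (hg : ContDiff ℝ 2 g) : Differentiable ℝ (deriv g) :=
  (d1c2 hg).differentiable one_ne_zero

lemma parts {g : ℝ → ℝ} (hg : ContDiff ℝ 2 g) (t a b : ℝ) :
    ∫ y in a..b, deriv (deriv g) y * (y - t)
      = deriv g b * (b - t) - deriv g a * (a - t) - (g b - g a) := by
  have h := intervalIntegral.integral_mul_deriv_eq_deriv_mul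
    (u := fun y => y - t) (v := deriv g) (u' := fun _ => (1:ℝ)) (v' := deriv (deriv g))
    (a := a) (b := b)
    (fun y _ => (hasDerivAt_id y).sub_const t)
    (fun y _ => (d1diff hg y).hasDerivAt)
    (intervalIntegrable_const)
    ((d2cont hg).intervalIntegrable a b)
  have h2 : (∫ y in a..b, (fun y => y - t) y * deriv (deriv g) y)
      = ∫ y in a..b, deriv (deriv g) y * (y - t) := by
    apply intervalIntegral.integral_congr; intro y _; simp [mul_comm]
  have h3 : (∫ y in a..b, (1:ℝ) * deriv g y) = g b - g a := by
    simp only [one_mul]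
    exact intervalIntegral.integral_deriv_eq_sub (fun y _ => (hg.differentiable (by norm_num)) y)
      ((d1diff hg).continuous.intervalIntegrable a b)
  rw [← h2, h, h3]; ring

lemma intg {g : ℝ → ℝ} (hg : ContDiff ℝ 2 g) (t a b : ℝ) :
    IntervalIntegrable (fun y => deriv (deriv g) y * max (y - t) 0) volume a b :=
  ((d2cont hg).mul (((continuous_id.sub continuous_const).max continuous_const))).intervalIntegrable a b

lemma lemB {g : ℝ → ℝ} (hg : ContDiff ℝ 2 g) {t : ℝ} (ht : t ∈ Set.Icc (-1:ℝ) 0) :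
    (∫ b in (0:ℝ)..1, deriv (deriv g) b * max (b - t) 0)
      = deriv g 1 * (1 - t) - g 1 + g 0 + deriv g 0 * t := by
  have h1 : (∫ b in (0:ℝ)..1, deriv (deriv g) b * max (b - t) 0)
      = ∫ b in (0:ℝ)..1, deriv (deriv g) b * (b - t) := by
    apply intervalIntegral.integral_congr
    intro y hy
    rw [Set.uIcc_of_le (by norm_num)] at hy
    have : (0:ℝ) ≤ y - t := by have := ht.2; have := hy.1; linarith
    simp [max_eq_left this]
  rw [h1, parts hg]; ring

lemma lemA {g : ℝ → ℝ} (hg : ContDiff ℝ 2 g) {t : ℝ} (ht : t ∈ Set.Icc (0:ℝ) 1) :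
    (∫ b in (0:ℝ)..1, deriv (deriv g) b * max (b - t) 0)
      = deriv g 1 * (1 - t) - g 1 + g t := by
  have hsplit := intervalIntegral.integral_add_adjacent_intervals
    (intg hg t 0 t) (intg hg t t 1)
  rw [← hsplit]
  have h0 : (∫ b in (0:ℝ)..t, deriv (deriv g) b * max (b - t) 0) = 0 := by
    have he : (∫ b in (0:ℝ)..t, deriv (deriv g) b * max (b - t) 0)
        = ∫ b in (0:ℝ)..t, (0:ℝ) := by
      apply intervalIntegral.integral_congr
      intro y hy
      rw [Set.uIcc_of_le ht.1] at hy
      have : y - t ≤ 0 := by have := hy.2; linarith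
      simp [max_eq_right this]
    simpa using he
  have h2 : (∫ b in t..(1:ℝ), deriv (deriv g) b * max (b - t) 0)
      = ∫ b in t..(1:ℝ), deriv (deriv g) b * (b - t) := by
    apply intervalIntegral.integral_congr
    intro y hy
    rw [Set.uIcc_of_le ht.2] at hy
    have : (0:ℝ) ≤ y - t := by have := hy.1; linarith
    simp [max_eq_left this]
  rw [h0, h2, parts hg]; ring

/-- For `f` twice continuously differentiable and `x ∈ [-1,1]`,
`∫_0^1 [f''(-b)·ReLU(x+b) + f''(b)·ReLU(-x+b)] db = f(x) + c₁ + c₂·x` where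
`c₁ = f(0) - f(1) - f(-1) + f'(1) - f'(-1)` and `c₂ = f'(0) - f'(1) - f'(-1)`. -/
theorem stmt3 (f : ℝ → ℝ) (hf : ContDiff ℝ 2 f) (x : ℝ) (hx : x ∈ Set.Icc (-1 : ℝ) 1) :
    (∫ b in (0 : ℝ)..1,
        (deriv (deriv f) (-b) * max (x + b) 0 + deriv (deriv f) b * max (-x + b) 0))
      = f x + (f 0 - f 1 - f (-1) + deriv f 1 - deriv f (-1))
          + (deriv f 0 - deriv f 1 - deriv f (-1)) * x := by
  set g : ℝ → ℝ := fun y => f (-y) with hgdef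
  have hg : ContDiff ℝ 2 g := hf.comp contDiff_neg
  have hdg : deriv g = fun y => -deriv f (-y) := funext fun y => deriv_comp_neg f y
  have hd2 : ∀ b, deriv (deriv g) b = deriv (deriv f) (-b) := by
    intro b
    rw [hdg]
    have : deriv (fun y => -deriv f (-y)) b = -deriv (fun y => deriv f (-y)) b := deriv.neg
    rw [this, deriv_comp_neg (deriv f) b, neg_neg]
  have key : (∫ b in (0 : ℝ)..1,
        (deriv (deriv f) (-b) * max (x + b) 0 + deriv (deriv f) b * max (-x + b) 0))
      = (∫ b in (0:ℝ)..1, deriv (deriv g) b * max (b - (-x)) 0)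
        + (∫ b in (0:ℝ)..1, deriv (deriv f) b * max (b - x) 0) := by
    rw [← intervalIntegral.integral_add (intg hg (-x) 0 1) (intg hf x 0 1)]
    apply intervalIntegral.integral_congr
    intro y _
    have e1 : y - -x = x + y := by ring
    have e2 : y - x = -x + y := by ring
    simp only [hd2, e1, e2]
  rw [key]
  have hG1 : g 1 = f (-1) := rfl
  have hG0 : g 0 = f 0 := by simp [hgdef]
  have hGx : g (-x) = f x := by simp [hgdef]
  have hDG1 : deriv g 1 = -deriv f (-1) := by rw [hdg]
  have hDG0 : deriv g 0 = -deriv f 0 := by rw [hdg]; simp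
  rcases le_or_gt 0 x with hx0 | hx0
  · rw [lemB hg (Set.mem_Icc.mpr ⟨by linarith [hx.2], by linarith⟩),
        lemA hf (Set.mem_Icc.mpr ⟨hx0, hx.2⟩), hG1, hG0, hDG1, hDG0]
    ring
  · rw [lemA hg (Set.mem_Icc.mpr ⟨by linarith, by linarith [hx.1]⟩),
        lemB hf (Set.mem_Icc.mpr ⟨hx.1, le_of_lt hx0⟩), hG1, hGx, hDG1]
    ring
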